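/- For well partial orders X and Y, o(X ⊔ Y) = o(X) ⊕ o(Y), where ⊔ is disjoint union (no relations between the parts) and ⊕ is the natural (Hessenberg) sum of ordinals. -/

import Mathlib

open Ordinal

universe u

/-- Natural (Hessenberg) sum of ordinals, as formerly in Mathlib's `Ordinal.nadd`. -/
noncomputable def Ordinal.nadd (a b : Ordinal.{u}) : Ordinal.{u} :=
  max (⨆ x : Set.Iio a, Order.succ (Ordinal.nadd x.1 b))
    (⨆ x : Set.Iio b, Order.succ (Ordinal.nadd a x.1))
termination_by (a, b)
decreasing_by all_goals cases x; decreasing_tactic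

infixl:65 " ♯ " => Ordinal.nadd

/-- `r` is a linear extension relation of the partial order on `X` (as a relation). -/
def IsLinExt {X : Type u} [PartialOrder X] (r : X → X → Prop) : Prop :=
  ∀ a b : X, a < b → r a b

/-- `α` is the type `o(X)` of the wpo `X`: the maximal order type of a
well-order linearizing the partial order on `X`, and this maximum is attained. -/
def IsMaxLinearization (X : Type u) [PartialOrder X] (α : Ordinal.{u}) : Prop :=
  (∃ (r : X → X → Prop) (h : IsWellOrder X r), IsLinExt r ∧ @Ordinal.type X r h = α) ∧
  ∀ (r : X → X → Prop) (h : IsWellOrder X r), IsLinExt r → @Ordinal.type X r h ≤ α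

/-- `D X`: the poset of lower sets of `X` that are downward closures of finite sets,
ordered by inclusion. -/
def DD (X : Type u) [Preorder X] : Type u :=
  {S : LowerSet X // ∃ F : Finset X, S = lowerClosure (F : Set X)}

instance {X : Type u} [Preorder X] : PartialOrder (DD X) :=
  Subtype.partialOrder _

private theorem nadd_def' (a b : Ordinal.{u}) : a ♯ b =
    max (⨆ x : Set.Iio a, Order.succ (x.1 ♯ b)) (⨆ x : Set.Iio b, Order.succ (a ♯ x.1)) := by
  rw [Ordinal.nadd]

private theorem lt_nadd_iff {a b c : Ordinal.{u}} :
    a < b ♯ c ↔ (∃ b' < b, a ≤ b' ♯ c) ∨ ∃ c' < c, a ≤ b ♯ c' := by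
  rw [nadd_def', lt_max_iff, Ordinal.lt_iSup_iff, Ordinal.lt_iSup_iff]
  simp only [Order.lt_succ_iff, Subtype.exists, Set.mem_Iio, exists_prop]

private theorem nadd_le_iff {a b c : Ordinal.{u}} :
    b ♯ c ≤ a ↔ (∀ b' < b, b' ♯ c < a) ∧ ∀ c' < c, b ♯ c' < a := by
  rw [← not_lt, lt_nadd_iff]
  simp only [not_or, not_exists, not_and, not_le]

private theorem nadd_lt_nadd_left {b c : Ordinal.{u}} (h : b < c) (a : Ordinal.{u}) :
    a ♯ b < a ♯ c :=
  lt_nadd_iff.2 (Or.inr ⟨b, h, le_rfl⟩)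

private theorem nadd_lt_nadd_right {b c : Ordinal.{u}} (h : b < c) (a : Ordinal.{u}) :
    b ♯ a < c ♯ a :=
  lt_nadd_iff.2 (Or.inl ⟨b, h, le_rfl⟩)

private theorem nadd_le_nadd_left {b c : Ordinal.{u}} (h : b ≤ c) (a : Ordinal.{u}) :
    a ♯ b ≤ a ♯ c := by
  rcases lt_or_eq_of_le h with h | rfl
  · exact (nadd_lt_nadd_left h a).le
  · exact le_rfl

private theorem nadd_le_nadd_right {b c : Ordinal.{u}} (h : b ≤ c) (a : Ordinal.{u}) :
    b ♯ a ≤ c ♯ a := by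
  rcases lt_or_eq_of_le h with h | rfl
  · exact (nadd_lt_nadd_right h a).le
  · exact le_rfl

private theorem nadd_le_nadd {a b c d : Ordinal.{u}} (h1 : a ≤ b) (h2 : c ≤ d) :
    a ♯ c ≤ b ♯ d :=
  (nadd_le_nadd_left h2 a).trans (nadd_le_nadd_right h1 d)

private theorem nadd_lt_nadd_of_lt_of_le {a b c d : Ordinal.{u}} (h1 : a < b) (h2 : c ≤ d) :
    a ♯ c < b ♯ d :=
  (nadd_lt_nadd_right h1 c).trans_le (nadd_le_nadd_left h2 b)

private theorem nadd_lt_nadd_of_le_of_lt {a b c d : Ordinal.{u}} (h1 : a ≤ b) (h2 : c < d) :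
    a ♯ c < b ♯ d :=
  (nadd_le_nadd_right h1 c).trans_lt (nadd_lt_nadd_left h2 b)

private theorem nadd_comm (a b : Ordinal.{u}) : a ♯ b = b ♯ a := by
  induction a using Ordinal.induction generalizing b with
  | h a IHa =>
  induction b using Ordinal.induction with
  | h b IHb =>
  rw [nadd_def', nadd_def' b a, max_comm]
  refine congrArg₂ max (congrArg _ (funext fun x => ?_)) (congrArg _ (funext fun x => ?_))
  · rw [IHb x.1 x.2]
  · rw [IHa x.1 x.2]

private theorem le_self_nadd {a b : Ordinal.{u}} : a ≤ a ♯ b := by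
  induction a using Ordinal.induction with
  | h a IH =>
  by_contra hcon
  push_neg at hcon
  exact lt_irrefl _ ((IH _ hcon).trans_lt (nadd_lt_nadd_right hcon b))

private theorem le_nadd_self {a b : Ordinal.{u}} : a ≤ b ♯ a := by
  rw [nadd_comm]; exact le_self_nadd

@[simp] private theorem nadd_zero (a : Ordinal.{u}) : a ♯ 0 = a := by
  induction a using Ordinal.induction with
  | h a IH =>
  refine le_antisymm (nadd_le_iff.2 ⟨fun b' hb' => by rw [IH b' hb']; exact hb',
    fun c' hc' => absurd hc' not_lt_zero⟩) le_self_nadd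

@[simp] private theorem zero_nadd (a : Ordinal.{u}) : 0 ♯ a = a := by
  rw [nadd_comm, nadd_zero]


private theorem add_le_of_forall {x y z : Ordinal.{u}} (h0 : x ≤ z)
    (h : ∀ d < y, x + d < z) : x + y ≤ z := by
  rcases Ordinal.zero_or_succ_or_isSuccLimit y with rfl | ⟨w, rfl⟩ | hy
  · simpa using h0
  · rw [add_succ, Order.succ_le_iff]
    exact h w (Order.lt_succ w)
  · rw [Ordinal.add_le_iff_of_isSuccLimit hy]
    exact fun d hd => (h d hd).le

/-- `x + (c ♯ b) ≤ (x + c) ♯ b`. -/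
private theorem add_nadd_le (x : Ordinal.{u}) : ∀ c b : Ordinal.{u}, x + (c ♯ b) ≤ (x + c) ♯ b := by
  have H : ∀ v : Ordinal.{u}, (∀ w < v, ∀ c b, c ♯ b = w → x + (c ♯ b) ≤ (x + c) ♯ b) →
      ∀ c b, c ♯ b = v → x + (c ♯ b) ≤ (x + c) ♯ b := by
    intro v IH c b hv
    refine add_le_of_forall (le_self_nadd.trans (nadd_le_nadd_right (le_self_add (a := x) (b := c)) b)) ?_
    intro d hd
    rcases lt_nadd_iff.1 hd with ⟨c', hc', hdc⟩ | ⟨b', hb', hdb⟩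
    · calc x + d ≤ x + (c' ♯ b) := add_le_add_right hdc x
        _ ≤ (x + c') ♯ b := IH _ (hv ▸ nadd_lt_nadd_right hc' b) _ _ rfl
        _ < (x + c) ♯ b := nadd_lt_nadd_right (add_lt_add_right hc' x) b
    · calc x + d ≤ x + (c ♯ b') := add_le_add_right hdb x
        _ ≤ (x + c) ♯ b' := IH _ (hv ▸ nadd_lt_nadd_left hb' c) _ _ rfl
        _ < (x + c) ♯ b := nadd_lt_nadd_left hb' _
  intro c b
  exact Ordinal.induction (p := fun v => ∀ c b, c ♯ b = v → x + (c ♯ b) ≤ (x + c) ♯ b)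
    (c ♯ b) H c b rfl

private theorem sub_opow_lt {l b : Ordinal.{u}} (h1 : ω ^ l ≤ b) (h2 : b < ω ^ (l + 1)) :
    b - ω ^ l < b := by
  rcases lt_or_eq_of_le (Ordinal.sub_le_self b (ω ^ l)) with h | h
  · exact h
  · exfalso
    have hb : ω ^ l + b = b := by
      conv_rhs => rw [← Ordinal.add_sub_cancel_of_le h1, h]
    have := Ordinal.add_eq_right_iff_mul_omega0_le.1 hb
    rw [← opow_succ] at this
    exact absurd h2 (not_lt.2 (by simpa using this))

private theorem nadd_key : ∀ v : Ordinal.{u},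
    (∀ e c b : Ordinal.{u}, c < ω ^ (e + 1) → b < ω ^ (e + 1) → (ω ^ e + c) ♯ b ≤ v →
      (ω ^ e + c) ♯ b = ω ^ e + (c ♯ b)) ∧
    (∀ e a b : Ordinal.{u}, a < ω ^ e → b < ω ^ e → a ♯ b ≤ v → a ♯ b < ω ^ e) ∧
    (∀ e a b : Ordinal.{u}, a < ω ^ e → b < ω ^ (e + 1) → a ♯ b ≤ v → a ♯ b < ω ^ e + b) := by
  intro v
  induction v using Ordinal.induction with
  | h v IH =>
  have QN : ∀ e c b : Ordinal.{u}, c < ω ^ (e + 1) → b < ω ^ (e + 1) → (ω ^ e + c) ♯ b ≤ v →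
      (ω ^ e + c) ♯ b = ω ^ e + (c ♯ b) := by
    intro e c b hc hb hle
    refine le_antisymm ?_ (add_nadd_le (ω ^ e) c b)
    rw [nadd_le_iff]
    constructor
    · intro a' ha'
      by_cases h : a' < ω ^ e
      · have hD := (IH (a' ♯ b) (lt_of_lt_of_le
            (nadd_lt_nadd_right (h.trans_le le_self_add) b) hle)).2.2 e a' b h hb le_rfl
        exact hD.trans_le (add_le_add_right le_nadd_self _)
      · push_neg at h
        have hsplit : ω ^ e + (a' - ω ^ e) = a' := Ordinal.add_sub_cancel_of_le h
        have hc' : a' - ω ^ e < c := by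
          rw [← add_lt_add_iff_left (ω ^ e), hsplit]; exact ha'
        have hmu : a' ♯ b < v := lt_of_lt_of_le (nadd_lt_nadd_right ha' b) hle
        conv_lhs => rw [← hsplit]
        rw [(IH _ hmu).1 e (a' - ω ^ e) b (hc'.trans hc) hb (by rw [hsplit])]
        exact add_lt_add_right (nadd_lt_nadd_right hc' b) _
    · intro b' hb'
      have hmu : (ω ^ e + c) ♯ b' < v := lt_of_lt_of_le (nadd_lt_nadd_left hb' _) hle
      rw [(IH _ hmu).1 e c b' hc (hb'.trans hb) le_rfl]
      exact add_lt_add_right (nadd_lt_nadd_left hb' c) _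
  have QM : ∀ e a b : Ordinal.{u}, a < ω ^ e → b < ω ^ e → a ♯ b ≤ v → a ♯ b < ω ^ e := by
    have core : ∀ a b e : Ordinal.{u}, log ω a ≤ log ω b → a < ω ^ e → b < ω ^ e →
        a ♯ b ≤ v → a ♯ b < ω ^ e := by
      intro a b e hlog ha hb hle
      rcases eq_or_ne b 0 with rfl | hb0
      · simpa using ha
      have hωl : ω ^ log ω b ≤ b := opow_log_le_self ω hb0
      have hl : log ω b < e := by
        by_contra hcon
        push_neg at hcon
        exact absurd hb (not_lt.2 ((opow_le_opow_right omega0_pos hcon).trans hωl))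
      have hb1 : b < ω ^ (log ω b + 1) := by
        rw [add_one_eq_succ]; exact lt_opow_succ_log_self one_lt_omega0 b
      have hsplit : ω ^ log ω b + (b - ω ^ log ω b) = b := Ordinal.add_sub_cancel_of_le hωl
      have hb₀b : b - ω ^ log ω b < b := sub_opow_lt hωl hb1
      have ha1 : a < ω ^ (log ω b + 1) := by
        rcases eq_or_ne a 0 with rfl | ha0
        · exact opow_pos _ omega0_pos
        refine lt_of_lt_of_le ?_ (opow_le_opow_right omega0_pos (add_le_add_left hlog 1))
        rw [add_one_eq_succ]; exact lt_opow_succ_log_self one_lt_omega0 a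
      have hb₀1 : b - ω ^ log ω b < ω ^ (log ω b + 1) := (Ordinal.sub_le_self _ _).trans_lt hb1
      have key : b ♯ a = ω ^ log ω b + ((b - ω ^ log ω b) ♯ a) := by
        conv_lhs => rw [← hsplit]
        exact QN _ _ _ hb₀1 ha1 (by rw [hsplit, nadd_comm]; exact hle)
      rw [nadd_comm, key]
      refine principal_add_omega0_opow e ((opow_lt_opow_iff_right one_lt_omega0).2 hl) ?_
      have hmu : (b - ω ^ log ω b) ♯ a < v :=
        lt_of_lt_of_le (by rw [nadd_comm a b]; exact nadd_lt_nadd_right hb₀b a) hle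
      exact (IH _ hmu).2.1 e _ _ (hb₀b.trans hb) ha le_rfl
    intro e a b ha hb hle
    rcases le_total (log ω a) (log ω b) with h | h
    · exact core a b e h ha hb hle
    · rw [nadd_comm]
      exact core b a e h hb ha (by rwa [nadd_comm b a])
  refine ⟨QN, QM, ?_⟩
  intro e a b ha hb hle
  by_cases hbe : b < ω ^ e
  · exact (QM e a b ha hbe hle).trans_le le_self_add
  · push_neg at hbe
    have hsplit : ω ^ e + (b - ω ^ e) = b := Ordinal.add_sub_cancel_of_le hbe
    have hb₀b : b - ω ^ e < b := sub_opow_lt hbe hb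
    have hb₀1 : b - ω ^ e < ω ^ (e + 1) := (Ordinal.sub_le_self _ _).trans_lt hb
    have ha1 : a < ω ^ (e + 1) :=
      ha.trans_le (opow_le_opow_right omega0_pos (le_self_add (a := e) (b := 1)))
    have key : a ♯ b = ω ^ e + ((b - ω ^ e) ♯ a) := by
      rw [nadd_comm]
      conv_lhs => rw [← hsplit]
      exact QN _ _ _ hb₀1 ha1 (by rw [hsplit, nadd_comm]; exact hle)
    have hmu : a ♯ (b - ω ^ e) < v := lt_of_lt_of_le (nadd_lt_nadd_left hb₀b a) hle
    have hlast : a ♯ (b - ω ^ e) < b := by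
      have := (IH _ hmu).2.2 e a _ ha hb₀1 le_rfl
      rwa [hsplit] at this
    rw [key, nadd_comm _ a]
    exact add_lt_add_right hlast _

private theorem nadd_split (e c b : Ordinal.{u}) (hc : c < ω ^ (e + 1)) (hb : b < ω ^ (e + 1)) :
    (ω ^ e + c) ♯ b = ω ^ e + (c ♯ b) :=
  (nadd_key ((ω ^ e + c) ♯ b)).1 e c b hc hb le_rfl

/-- The property that `f, g` give a partition of `Iio (a ♯ b)` into pieces of type `a` and `b`. -/
@[reducible] private def IsShuffle (a b : Ordinal.{u}) (f g : Ordinal.{u} → Ordinal.{u}) : Prop :=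
  (∀ x, x < a → f x < a ♯ b) ∧ (∀ y, y < b → g y < a ♯ b) ∧
  (∀ x x', x < x' → x' < a → f x < f x') ∧ (∀ y y', y < y' → y' < b → g y < g y') ∧
  (∀ x y, x < a → y < b → f x ≠ g y) ∧
  (∀ z, z < a ♯ b → (∃ x, x < a ∧ f x = z) ∨ (∃ y, y < b ∧ g y = z))

private theorem isShuffle_comm {a b : Ordinal.{u}} {f g} (h : IsShuffle a b f g) :
    IsShuffle b a g f := by
  obtain ⟨h1, h2, h3, h4, h5, h6⟩ := h
  rw [IsShuffle, nadd_comm]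
  exact ⟨h2, h1, h4, h3, fun y x hy hx => (h5 x y hx hy).symm,
    fun z hz => (h6 z hz).symm⟩

private theorem exists_shuffle : ∀ a b : Ordinal.{u}, ∃ f g, IsShuffle a b f g := by
  have main : ∀ v : Ordinal.{u}, (∀ w < v, ∀ a b, a ♯ b = w → ∃ f g, IsShuffle a b f g) →
      ∀ a b, a ♯ b = v → ∃ f g, IsShuffle a b f g := by
    intro v IH a b hv
    rcases eq_or_ne a 0 with rfl | ha0
    · refine ⟨id, id, fun x hx => absurd hx not_lt_zero, fun y hy => ?_,
        fun x x' _ hx' => absurd hx' not_lt_zero, fun y y' h _ => h,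
        fun x y hx _ => absurd hx not_lt_zero, fun z hz => Or.inr ⟨z, ?_, rfl⟩⟩
      · simpa using hy
      · simpa using hz
    rcases eq_or_ne b 0 with rfl | hb0
    · refine ⟨id, id, fun x hx => ?_, fun y hy => absurd hy not_lt_zero,
        fun x x' h _ => h, fun y y' _ hy' => absurd hy' not_lt_zero,
        fun x y _ hy => absurd hy not_lt_zero, fun z hz => Or.inl ⟨z, ?_, rfl⟩⟩
      · simpa using hx
      · simpa using hz
    -- core construction assuming log ω b ≤ log ω a
    have core : ∀ a b : Ordinal.{u}, a ≠ 0 → a ♯ b = v → log ω b ≤ log ω a →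
        ∃ f g, IsShuffle a b f g := by
      intro a b ha0 hv hlog
      set e := log ω a with he
      have hωe : ω ^ e ≤ a := opow_log_le_self ω ha0
      have ha1 : a < ω ^ (e + 1) := by
        rw [add_one_eq_succ]; exact lt_opow_succ_log_self one_lt_omega0 a
      have hb1 : b < ω ^ (e + 1) := by
        rcases eq_or_ne b 0 with rfl | hb0'
        · exact opow_pos _ omega0_pos
        refine lt_of_lt_of_le ?_ (opow_le_opow_right omega0_pos (add_le_add_left hlog 1))
        rw [add_one_eq_succ]; exact lt_opow_succ_log_self one_lt_omega0 b
      set c := a - ω ^ e with hcdef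
      have hsplit : ω ^ e + c = a := Ordinal.add_sub_cancel_of_le hωe
      have hc1 : c < ω ^ (e + 1) := (Ordinal.sub_le_self _ _).trans_lt ha1
      have hca : c < a := sub_opow_lt hωe ha1
      have hN : a ♯ b = ω ^ e + (c ♯ b) := by
        conv_lhs => rw [← hsplit]
        exact nadd_split e c b hc1 hb1
      obtain ⟨f', g', H1, H2, H3, H4, H5, H6⟩ :=
        IH (c ♯ b) (hv ▸ nadd_lt_nadd_right hca b) c b rfl
      refine ⟨fun x => if x < ω ^ e then x else ω ^ e + f' (x - ω ^ e),
        fun y => ω ^ e + g' y, ?_, ?_, ?_, ?_, ?_, ?_⟩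
      · intro x hx
        dsimp only
        rw [hN]
        by_cases h : x < ω ^ e
        · rw [if_pos h]; exact h.trans_le le_self_add
        · rw [if_neg h]
          push_neg at h
          refine add_lt_add_right (H1 _ ?_) _
          rw [← add_lt_add_iff_left (ω ^ e), Ordinal.add_sub_cancel_of_le h, hsplit]
          exact hx
      · intro y hy
        dsimp only
        rw [hN]
        exact add_lt_add_right (H2 y hy) _
      · intro x x' hxx' hx'
        dsimp only
        by_cases h : x < ω ^ e
        · rw [if_pos h]
          by_cases h' : x' < ω ^ e
          · rwa [if_pos h']
          · rw [if_neg h']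
            exact h.trans_le le_self_add
        · have h' : ¬ x' < ω ^ e := fun hcon => h (hxx'.trans hcon)
          rw [if_neg h, if_neg h']
          push_neg at h h'
          refine add_lt_add_right (H3 _ _ ?_ ?_) _
          · rw [← add_lt_add_iff_left (ω ^ e), Ordinal.add_sub_cancel_of_le h,
              Ordinal.add_sub_cancel_of_le h']
            exact hxx'
          · rw [← add_lt_add_iff_left (ω ^ e), Ordinal.add_sub_cancel_of_le h', hsplit]
            exact hx'
      · intro y y' hyy' hy'
        dsimp only
        exact add_lt_add_right (H4 y y' hyy' hy') _
      · intro x y hx hy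
        dsimp only
        by_cases h : x < ω ^ e
        · rw [if_pos h]
          exact ne_of_lt (h.trans_le le_self_add)
        · rw [if_neg h]
          push_neg at h
          intro hcon
          refine H5 (x - ω ^ e) y ?_ hy ((add_right_inj _).1 hcon)
          rw [← add_lt_add_iff_left (ω ^ e), Ordinal.add_sub_cancel_of_le h, hsplit]
          exact hx
      · intro z hz
        dsimp only
        rw [hN] at hz
        by_cases h : z < ω ^ e
        · exact Or.inl ⟨z, h.trans_le (hsplit ▸ (le_self_add : ω ^ e ≤ ω ^ e + c)), if_pos h⟩
        · push_neg at h
          have hz' : z - ω ^ e < c ♯ b := by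
            rw [← add_lt_add_iff_left (ω ^ e), Ordinal.add_sub_cancel_of_le h]
            exact hz
          rcases H6 _ hz' with ⟨x, hx, hfx⟩ | ⟨y, hy, hgy⟩
          · refine Or.inl ⟨ω ^ e + x, ?_, ?_⟩
            · rw [← hsplit]; exact add_lt_add_right hx _
            · skip
              rw [if_neg (not_lt.2 (le_self_add (b := x))), Ordinal.add_sub_cancel, hfx,
                Ordinal.add_sub_cancel_of_le h]
          · refine Or.inr ⟨y, hy, ?_⟩
            skip
            rw [hgy, Ordinal.add_sub_cancel_of_le h]
    rcases le_total (log ω b) (log ω a) with h | h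
    · exact core a b ha0 hv h
    · obtain ⟨f, g, hfg⟩ := core b a hb0 (by rwa [nadd_comm]) h
      exact ⟨g, f, isShuffle_comm hfg⟩
  intro a b
  exact Ordinal.induction (p := fun v => ∀ a b, a ♯ b = v → ∃ f g, IsShuffle a b f g)
    (a ♯ b) main a b rfl


private theorem subrel_type_mono {Z : Type u} (t : Z → Z → Prop) [IsWellOrder Z t]
    {P Q : Set Z} (h : P ⊆ Q) : type (Subrel t (· ∈ P)) ≤ type (Subrel t (· ∈ Q)) :=
  type_le_iff'.2 ⟨⟨⟨Set.inclusion h, Set.inclusion_injective h⟩, Iff.rfl⟩⟩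

/-- Iso collapsing an iterated subrelation. -/
private noncomputable def doubleSubrelIso {Z : Type u} (t : Z → Z → Prop) (S : Set Z) (Q : Set ↥S) :
    Subrel (Subrel t (· ∈ S)) (· ∈ Q) ≃r Subrel t (· ∈ (Subtype.val '' Q)) :=
  ⟨Equiv.Set.image Subtype.val Q Subtype.val_injective, Iff.rfl⟩

private theorem type_le_nadd_parts : ∀ (v : Ordinal.{u}) (Z : Type u) (t : Z → Z → Prop)
    (_ : IsWellOrder Z t) (P : Set Z), type t = v →
    type t ≤ type (Subrel t (· ∈ P)) ♯ type (Subrel t (· ∈ Pᶜ)) := by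
  intro v
  induction v using Ordinal.induction with
  | h v IH =>
  intro Z t ht P htv
  suffices hz : ∀ z : Z, typein t z < type (Subrel t (· ∈ P)) ♯ type (Subrel t (· ∈ Pᶜ)) by
    by_contra hcon
    push_neg at hcon
    obtain ⟨z, hz'⟩ := typein_surj t hcon
    exact absurd (hz' ▸ hz z) (lt_irrefl _)
  intro z
  set S : Set Z := {w | t w z} with hS
  have htyz : typein t z = type (Subrel t (· ∈ S)) := (type_subrel t z).symm
  set P' : Set ↥S := {w : ↥S | w.1 ∈ P} with hP'
  have IH' := IH (typein t z) (htv ▸ typein_lt_type t z) ↥S (Subrel t (· ∈ S)) inferInstance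
    P' htyz.symm
  rw [htyz]
  refine lt_of_le_of_lt IH' ?_
  -- identify the two pieces
  have hPart : ∀ Q : Set ↥S, type (Subrel (Subrel t (· ∈ S)) (· ∈ Q)) = type (Subrel t (· ∈ (Subtype.val '' Q))) :=
    fun Q => type_eq.2 ⟨doubleSubrelIso t S Q⟩
  have himgP : Subtype.val '' P' = S ∩ P := by
    ext w
    constructor
    · rintro ⟨x, hxP, rfl⟩; exact ⟨x.2, hxP⟩
    · rintro ⟨hwS, hwP⟩; exact ⟨⟨w, hwS⟩, hwP, rfl⟩
  have himgPc : Subtype.val '' P'ᶜ = S ∩ Pᶜ := by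
    ext w
    constructor
    · rintro ⟨x, hxP, rfl⟩; exact ⟨x.2, hxP⟩
    · rintro ⟨hwS, hwP⟩; exact ⟨⟨w, hwS⟩, hwP, rfl⟩
  rw [hPart, hPart, himgP, himgPc]
  -- the key strict bound
  have hstrict : ∀ (Q : Set Z), z ∈ Q → type (Subrel t (· ∈ (S ∩ Q))) < type (Subrel t (· ∈ Q)) := by
    intro Q hzQ
    have : S ∩ Q = Subtype.val '' {w : ↥Q | Subrel t (· ∈ Q) w ⟨z, hzQ⟩} := by
      ext w
      constructor
      · rintro ⟨hwS, hwQ⟩; exact ⟨⟨w, hwQ⟩, hwS, rfl⟩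
      · rintro ⟨x, hx, rfl⟩; exact ⟨hx, x.2⟩
    rw [this, ← type_eq.2 ⟨doubleSubrelIso t Q _⟩]
    exact (type_subrel (Subrel t (· ∈ Q)) ⟨z, hzQ⟩).trans_lt (typein_lt_type _ _)
  by_cases hzP : z ∈ P
  · exact nadd_lt_nadd_of_lt_of_le (hstrict P hzP)
      (subrel_type_mono t (Set.inter_subset_right))
  · exact nadd_lt_nadd_of_le_of_lt (subrel_type_mono t (Set.inter_subset_right))
      (hstrict Pᶜ hzP)

private theorem stmt5' {X Y : Type u} [PartialOrder X] [PartialOrder Y]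
    (α β γ : Ordinal.{u}) (hα : IsMaxLinearization X α) (hβ : IsMaxLinearization Y β)
    (hγ : IsMaxLinearization (X ⊕ Y) γ) : γ = α ♯ β := by
  apply le_antisymm
  · -- γ ≤ α ♯ β
    obtain ⟨t, hwo, hlin, htype⟩ := hγ.1
    set r : X → X → Prop := fun x y => t (Sum.inl x) (Sum.inl y) with hrdef
    set s : Y → Y → Prop := fun x y => t (Sum.inr x) (Sum.inr y) with hsdef
    have einl : r ↪r t := ⟨⟨Sum.inl, Sum.inl_injective⟩, Iff.rfl⟩
    have einr : s ↪r t := ⟨⟨Sum.inr, Sum.inr_injective⟩, Iff.rfl⟩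
    haveI hwr : IsWellOrder X r := einl.isWellOrder
    haveI hws : IsWellOrder Y s := einr.isWellOrder
    have hlr : IsLinExt r := fun x y hxy => hlin _ _ (Sum.inl_lt_inl_iff.2 hxy)
    have hls : IsLinExt s := fun x y hxy => hlin _ _ (Sum.inr_lt_inr_iff.2 hxy)
    have h1 : type t ≤ type (Subrel t (· ∈ (Set.range Sum.inl))) ♯
        type (Subrel t (· ∈ (Set.range Sum.inl)ᶜ)) :=
      type_le_nadd_parts (type t) _ t hwo _ rfl
    have hisoL : type r = type (Subrel t (· ∈ (Set.range Sum.inl))) :=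
      type_eq.2 ⟨⟨Equiv.ofInjective Sum.inl Sum.inl_injective, Iff.rfl⟩⟩
    have hisoR : type s = type (Subrel t (· ∈ (Set.range Sum.inl)ᶜ)) := by
      rw [Set.compl_range_inl]
      exact type_eq.2 ⟨⟨Equiv.ofInjective Sum.inr Sum.inr_injective, Iff.rfl⟩⟩
    rw [← htype]
    calc type t ≤ type (Subrel t (· ∈ (Set.range Sum.inl))) ♯ type (Subrel t (· ∈ (Set.range Sum.inl)ᶜ)) := h1
      _ = type r ♯ type s := by rw [← hisoL, ← hisoR]
      _ ≤ α ♯ β := nadd_le_nadd (hα.2 r hwr hlr) (hβ.2 s hws hls)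
  · -- α ♯ β ≤ γ
    obtain ⟨r, hwr, hlr, hrtype⟩ := hα.1
    obtain ⟨s, hws, hls, hstype⟩ := hβ.1
    obtain ⟨f, g, H1, H2, H3, H4, H5, H6⟩ := exists_shuffle α β
    set val : X ⊕ Y → Ordinal.{u} :=
      Sum.elim (fun x => f (typein r x)) (fun y => g (typein s y)) with hval
    have hbnd : ∀ u, val u < α ♯ β := by
      intro u
      rcases u with x | y
      · exact H1 _ (hrtype ▸ typein_lt_type r x)
      · exact H2 _ (hstype ▸ typein_lt_type s y)
    have hfinj : ∀ x x' : Ordinal, x < α → x' < α → f x = f x' → x = x' := by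
      intro x x' hx hx' hfe
      rcases lt_trichotomy x x' with h | h | h
      · exact absurd hfe (ne_of_lt (H3 _ _ h hx'))
      · exact h
      · exact absurd hfe.symm (ne_of_lt (H3 _ _ h hx))
    have hginj : ∀ y y' : Ordinal, y < β → y' < β → g y = g y' → y = y' := by
      intro y y' hy hy' hge
      rcases lt_trichotomy y y' with h | h | h
      · exact absurd hge (ne_of_lt (H4 _ _ h hy'))
      · exact h
      · exact absurd hge.symm (ne_of_lt (H4 _ _ h hy))
    have hinj : Function.Injective val := by
      intro u w huw
      rcases u with x | y <;> rcases w with x' | y'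
      · exact congrArg Sum.inl (typein_injective r
          (hfinj _ _ (hrtype ▸ typein_lt_type r x) (hrtype ▸ typein_lt_type r x') huw))
      · exact absurd huw (H5 _ _ (hrtype ▸ typein_lt_type r x) (hstype ▸ typein_lt_type s y'))
      · exact absurd huw.symm
          (H5 _ _ (hrtype ▸ typein_lt_type r x') (hstype ▸ typein_lt_type s y))
      · exact congrArg Sum.inr (typein_injective s
          (hginj _ _ (hstype ▸ typein_lt_type s y) (hstype ▸ typein_lt_type s y') huw))
    set t : X ⊕ Y → X ⊕ Y → Prop := fun u w => val u < val w with ht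
    have emb : t ↪r ((· < ·) : Ordinal.{u} → Ordinal.{u} → Prop) := ⟨⟨val, hinj⟩, Iff.rfl⟩
    haveI hwt : IsWellOrder (X ⊕ Y) t := emb.isWellOrder
    have hlint : IsLinExt t := by
      intro u w huw
      rcases u with x | y <;> rcases w with x' | y'
      · have hxx' : x < x' := Sum.inl_lt_inl_iff.1 huw
        exact H3 _ _ ((typein_lt_typein r).2 (hlr _ _ hxx')) (hrtype ▸ typein_lt_type r x')
      · exact absurd huw Sum.not_inl_lt_inr
      · exact absurd huw Sum.not_inr_lt_inl
      · have hyy' : y < y' := Sum.inr_lt_inr_iff.1 huw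
        exact H4 _ _ ((typein_lt_typein s).2 (hls _ _ hyy')) (hstype ▸ typein_lt_type s y')
    have htt : type t = α ♯ β := by
      haveI hwo2 : IsWellOrder (α ♯ β).ToType (· < ·) := isWellOrder_lt (α := (α ♯ β).ToType)
      set F : X ⊕ Y → (α ♯ β).ToType := fun u => ToType.mk (o := α ♯ β) ⟨val u, hbnd u⟩ with hF
      have hbij : Function.Bijective F := by
        constructor
        · intro u w huw
          have : val u = val w := by
            have := (ToType.mk (o := α ♯ β)).injective huw
            simpa [Subtype.ext_iff] using this
          exact hinj this
        · intro z
          obtain ⟨zo, hzo⟩ := (ToType.mk (o := α ♯ β)).surjective z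
          rcases H6 zo.1 zo.2 with ⟨x', hx', hfx⟩ | ⟨y', hy', hgy⟩
          · obtain ⟨x, hx⟩ := typein_surj r (hrtype ▸ hx')
            refine ⟨Sum.inl x, ?_⟩
            rw [← hzo]
            exact congrArg (ToType.mk (o := α ♯ β))
              (Subtype.ext (show f (typein r x) = zo.1 by rw [hx]; exact hfx))
          · obtain ⟨y, hy⟩ := typein_surj s (hstype ▸ hy')
            refine ⟨Sum.inr y, ?_⟩
            rw [← hzo]
            exact congrArg (ToType.mk (o := α ♯ β))
              (Subtype.ext (show g (typein s y) = zo.1 by rw [hy]; exact hgy))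
      have hiso : t ≃r ((· < ·) : (α ♯ β).ToType → (α ♯ β).ToType → Prop) := by
        refine ⟨Equiv.ofBijective _ hbij, ?_⟩
        intro u w
        show (ToType.mk (o := α ♯ β)) ⟨val u, hbnd u⟩ < (ToType.mk (o := α ♯ β)) ⟨val w, hbnd w⟩ ↔ _
        rw [OrderIso.lt_iff_lt]; exact Iff.rfl
      calc type t = type ((· < ·) : (α ♯ β).ToType → (α ♯ β).ToType → Prop) := type_eq.2 ⟨hiso⟩
        _ = α ♯ β := type_toType _
    exact htt ▸ hγ.2 t hwt hlint

/-- De Jongh–Parikh: o(X ⊔ Y) = o(X) ♯ o(Y) (natural sum). -/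
theorem stmt5 {X Y : Type u} [PartialOrder X] [PartialOrder Y]
    (hX : (Set.univ : Set X).IsPWO) (hY : (Set.univ : Set Y).IsPWO)
    (α β γ : Ordinal.{u}) (hα : IsMaxLinearization X α) (hβ : IsMaxLinearization Y β)
    (hγ : IsMaxLinearization (X ⊕ Y) γ) : γ = α ♯ β :=
  stmt5' α β γ hα hβ hγ
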